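/- Per-ion power bound: under the hypotheses of the per-ion lemma (steady state j_x = ν j_r, ΔG_E < 0, ν > 0, strict inequality ΔG_E/ν < ΔG_x < 0 so that ε = ν ΔG_x/ΔG_E ∈ (0,1]), the active power Q_x = -F ΔG_E j_r satisfies Q_x = -(F/ε) ΔG_x j_x and hence Q_x ≥ -F ΔG_x j_x ≥ 0, where F > 0. -/

import Mathlib

/-- Per-ion power bound. -/
theorem per_ion_power_bound (F η ν jxp jrp ΔGE ΔGx : ℝ)
    (hF : 0 < F) (hη : 0 < η) (hν : 0 < ν) (hjx : 0 < jxp) (hjr : 0 < jrp)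
    (hE : ΔGE < 0) (h1 : ΔGE / ν < ΔGx) (h2 : ΔGx < 0)
    (jx jr : ℝ)
    (hjxdef : jx = jxp * (1 - Real.exp (η * ΔGx)))
    (hjrdef : jr = jrp * (1 - Real.exp (η * (ΔGE - ν * ΔGx))))
    (hss : jx = ν * jr)
    (ε Qx : ℝ) (hε : ε = ν * ΔGx / ΔGE) (hQ : Qx = -F * ΔGE * jr) :
    Qx = -(F / ε) * ΔGx * jx ∧ Qx ≥ -F * ΔGx * jx ∧ -F * ΔGx * jx ≥ 0 := by
  have hEν : ΔGE < ν * ΔGx := by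
    have := (div_lt_iff₀ hν).mp h1
    linarith [this]
  have hεpos : 0 < ε := by
    rw [hε]
    exact div_pos_of_neg_of_neg (by nlinarith) hE
  have hεle : ε ≤ 1 := by
    rw [hε, div_le_one_iff]
    right; right; exact ⟨hE, le_of_lt hEν⟩
  have hjxpos : 0 < jx := by
    rw [hjxdef]
    have : Real.exp (η * ΔGx) < 1 := by
      rw [Real.exp_lt_one_iff]; nlinarith
    nlinarith
  have hjrpos : 0 < jr := by nlinarith
  have hxne : ΔGx ≠ 0 := ne_of_lt h2
  have hνne : ν ≠ 0 := ne_of_gt hν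
  have hEne : ΔGE ≠ 0 := ne_of_lt hE
  have heq : Qx = -(F / ε) * ΔGx * jx := by
    rw [hQ, hε, hss]
    field_simp
  have hbase0 : -F * ΔGx * jx ≥ 0 := by
    nlinarith [mul_pos (mul_pos hF (neg_pos.mpr h2)) hjxpos]
  refine ⟨heq, ?_, hbase0⟩
  rw [heq]
  have h1ε : 1 ≤ 1 / ε := one_le_one_div hεpos hεle
  have : -(F / ε) * ΔGx * jx = (1 / ε) * (-F * ΔGx * jx) := by
    field_simp
  rw [this]
  nlinarith [mul_le_mul_of_nonneg_right h1ε hbase0]
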